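/- The quaternionic helicoidal map f : ℍ → ℍ × Im(ℍ) defined by f(x+Iy) = (sinh x · cos y + I sinh x · sin y, I y) (for I² = -1, x, y ∈ ℝ, with the convention that for y = 0 the value is (sinh x, 0)) is well defined and injective. -/

import Mathlib

open Quaternion

lemma helicoidal_aux_sq (I : ℍ[ℝ]) (h : I ^ 2 = -1) :
    I.re = 0 ∧ I.imI ^ 2 + I.imJ ^ 2 + I.imK ^ 2 = 1 := by
  rw [sq, Quaternion.ext_iff] at h
  simp [Quaternion.re_mul, Quaternion.imI_mul, Quaternion.imJ_mul, Quaternion.imK_mul] at h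
  obtain ⟨h1, h2, h3, h4⟩ := h
  constructor
  · nlinarith [sq_nonneg I.re, sq_nonneg I.imI, sq_nonneg I.imJ, sq_nonneg I.imK]
  · nlinarith [sq_nonneg I.re]

lemma helicoidal_aux_sinh (x u y : ℝ)
    (hc : Real.sinh x * Real.cos y = Real.sinh u * Real.cos y)
    (hs : Real.sinh x * Real.sin y * y = Real.sinh u * Real.sin y * y) :
    x = u := by
  have : Real.sinh x = Real.sinh u := by
    rcases eq_or_ne (Real.cos y) 0 with hcy | hcy
    · have hsy : Real.sin y ≠ 0 := by
        intro h0; nlinarith [Real.sin_sq_add_cos_sq y]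
      have hy0 : y ≠ 0 := by
        rintro rfl; simp at hcy
      have h' := mul_right_cancel₀ hy0 hs
      exact mul_right_cancel₀ hsy h'
    · exact mul_right_cancel₀ hcy hc
  exact Real.sinh_injective this

/-- The quaternionic helicoidal map `f(x + Iy) = (sinh x cos y + I sinh x sin y, Iy)` is
well defined (its value does not depend on the representation of `x + Iy`, in particular
`x + Iy = x + (-I)(-y)` and at real points it does not depend on `I`) and injective. -/
theorem helicoidal_map_well_defined_and_injective :
    let F : ℝ → ℝ → ℍ[ℝ] → ℍ[ℝ] × ℍ[ℝ] := fun x y I =>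
      (((Real.sinh x * Real.cos y : ℝ) : ℍ[ℝ]) + (Real.sinh x * Real.sin y) • I, y • I)
    (∀ (x y : ℝ) (I : ℍ[ℝ]), I ^ 2 = -1 → F x y I = F x (-y) (-I)) ∧
    (∀ (x : ℝ) (I J : ℍ[ℝ]), I ^ 2 = -1 → J ^ 2 = -1 → F x 0 I = F x 0 J) ∧
    (∀ (x y u v : ℝ) (I J : ℍ[ℝ]), I ^ 2 = -1 → J ^ 2 = -1 →
      F x y I = F u v J → (x : ℍ[ℝ]) + y • I = (u : ℍ[ℝ]) + v • J) := by
  intro F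
  refine ⟨?_, ?_, ?_⟩
  · intro x y I _
    simp [F, Real.cos_neg, Real.sin_neg, mul_neg, neg_smul, smul_neg]
  · intro x I J _ _
    simp [F]
  · intro x y u v I J hI hJ h
    obtain ⟨hIre, hIn⟩ := helicoidal_aux_sq I hI
    obtain ⟨hJre, hJn⟩ := helicoidal_aux_sq J hJ
    obtain ⟨h1, h2⟩ := Prod.ext_iff.mp h
    rw [Quaternion.ext_iff] at h1 h2
    simp only [F, Quaternion.re_add, Quaternion.imI_add, Quaternion.imJ_add, Quaternion.imK_add,
      Quaternion.re_coe, Quaternion.imI_coe, Quaternion.imJ_coe, Quaternion.imK_coe,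
      Quaternion.re_smul, Quaternion.imI_smul, Quaternion.imJ_smul, Quaternion.imK_smul,
      smul_eq_mul, add_zero, zero_add] at h1 h2
    obtain ⟨e0, e1, e2, e3⟩ := h1
    obtain ⟨f0, f1, f2, f3⟩ := h2
    rw [hIre, hJre, mul_zero, mul_zero, add_zero, add_zero] at e0
    -- y^2 = v^2
    have hy2 : y ^ 2 = v ^ 2 := by
      have p1 : (y * I.imI) * (y * I.imI) = (v * J.imI) * (v * J.imI) := by rw [f1]
      have p2 : (y * I.imJ) * (y * I.imJ) = (v * J.imJ) * (v * J.imJ) := by rw [f2]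
      have p3 : (y * I.imK) * (y * I.imK) = (v * J.imK) * (v * J.imK) := by rw [f3]
      linear_combination p1 + p2 + p3 - y ^ 2 * hIn + v ^ 2 * hJn
    -- sinh x sin y * y = sinh u sin v * v
    have hsv : Real.sinh x * Real.sin y * y = Real.sinh u * Real.sin v * v := by
      have q1 : (Real.sinh x * Real.sin y * I.imI) * (y * I.imI)
          = (Real.sinh u * Real.sin v * J.imI) * (v * J.imI) := by rw [e1, f1]
      have q2 : (Real.sinh x * Real.sin y * I.imJ) * (y * I.imJ)
          = (Real.sinh u * Real.sin v * J.imJ) * (v * J.imJ) := by rw [e2, f2]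
      have q3 : (Real.sinh x * Real.sin y * I.imK) * (y * I.imK)
          = (Real.sinh u * Real.sin v * J.imK) * (v * J.imK) := by rw [e3, f3]
      linear_combination q1 + q2 + q3 - Real.sinh x * Real.sin y * y * hIn
        + Real.sinh u * Real.sin v * v * hJn
    have hvy : v = y ∨ v = -y := by
      have habs : |v| = |y| := by
        rw [← Real.sqrt_sq_eq_abs, ← Real.sqrt_sq_eq_abs, hy2]
      exact abs_eq_abs.mp habs
    have hxu : x = u := by
      rcases hvy with rfl | rfl
      · exact helicoidal_aux_sinh x u v e0 hsv
      · rw [Real.cos_neg] at e0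
        rw [Real.sin_neg] at hsv
        exact helicoidal_aux_sinh x u y e0 (by linarith [hsv])
    subst hxu
    rw [show (y • I : ℍ[ℝ]) = v • J from by
      ext <;> simp [Quaternion.re_smul, Quaternion.imI_smul, Quaternion.imJ_smul,
        Quaternion.imK_smul, smul_eq_mul, hIre, hJre, f1, f2, f3]]
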